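/- Let k be a number field and C a smooth elliptic curve over k with a rational point o, identified with its group of rational points. Suppose q ∈ C(k) is not divisible by 3 in the group C(k). Set d_0 = 3(o) and d_1 = 2(o) + (q), and L_0 = O_C(d_0), L_1 = O_C(d_1). If C has no complex multiplication over the algebraic closure, then there is no automorphism σ of C over k with σ^* L_0 ≅ L_1. Hence L_0 and L_1 of degree 3 lie in different Aut(C)-orbits. -/
import Mathlib


/-- Let `k` be a number field and `C` a smooth elliptic curve over `k` with
a rational point `o` and no complex multiplication over the algebraic closure.  Encode:
`P = C(k)` is the Mordell–Weil group (finitely generated, with `o = 0`); divisors are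
`d : P →₀ ℤ`; `O d ∈ PicC` is the class of `O_C(d)`; on an elliptic curve
`O d = O d'` iff the degrees agree and the sums `|d| = Σ n_p · p` agree (`hO`).  Absence
of complex multiplication means every automorphism `σ` of `C` is of the form
`σ_t : p ↦ t + p` or `τ_t : p ↦ t − p`, so on divisors `σ^*` is
`mapDomain (· − t)` resp. `mapDomain (t − ·)` (`hAutform`).  Claim: if `q ∈ C(k)` is not
divisible by 3, then with `d₀ = 3(o)` and `d₁ = 2(o) + (q)` there is no automorphism `σ`
of `C` with `σ^* O_C(d₀) ≅ O_C(d₁)`; hence `L₀, L₁` lie in different `Aut(C)`-orbits. -/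
theorem no_automorphism_relating_generic_degree_three_bundles
    (k : Type) [Field k] [NumberField k]
    (P : Type) [AddCommGroup P] [Module.Finite ℤ P]  -- P = C(k), Mordell–Weil
    (PicC : Type) (O : (P →₀ ℤ) → PicC)
    (hO : ∀ d d' : P →₀ ℤ, O d = O d' ↔
      (d.sum (fun _ n => n) = d'.sum (fun _ n => n) ∧
       d.sum (fun p n => n • p) = d'.sum (fun p n => n • p)))
    (Aut : Type) (pull : Aut → PicC → PicC)
    -- no complex multiplication: automorphisms are exactly ±translations
    (hAutform : ∀ σ : Aut,
      (∃ t : P, ∀ d : P →₀ ℤ, pull σ (O d) = O (Finsupp.mapDomain (fun p => p - t) d)) ∨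
      (∃ t : P, ∀ d : P →₀ ℤ, pull σ (O d) = O (Finsupp.mapDomain (fun p => t - p) d)))
    (q : P) (hq : ∀ t : P, (3 : ℤ) • t ≠ q) :
    ¬ ∃ σ : Aut,
        pull σ (O (Finsupp.single (0 : P) 3)) =
          O (Finsupp.single (0 : P) 2 + Finsupp.single q 1) := by
  rintro ⟨σ, hσ⟩
  have key : ∀ t : P, O (Finsupp.single t 3) ≠
      O (Finsupp.single (0 : P) 2 + Finsupp.single q 1) := by
    intro t h
    rw [hO] at h
    have h2 := h.2
    rw [Finsupp.sum_single_index (by simp)] at h2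
    rw [Finsupp.sum_add_index' (by simp) (by intro p a b; exact add_smul a b p)] at h2
    rw [Finsupp.sum_single_index (by simp), Finsupp.sum_single_index (by simp)] at h2
    simp only [smul_zero, one_smul, zero_add] at h2
    exact hq t h2
  rcases hAutform σ with ⟨t, ht⟩ | ⟨t, ht⟩
  · rw [ht] at hσ
    rw [Finsupp.mapDomain_single] at hσ
    exact key _ hσ
  · rw [ht] at hσ
    rw [Finsupp.mapDomain_single] at hσ
    exact key _ hσ
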